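/- Under simple random sampling without replacement of n units from N, the sample variance s² = (1/(n-1))∑_{i sampled}(Y_i - ȳ)² is an unbiased estimator of the population variance S² = (1/(N-1))∑_i (Y_i - Ȳ)². -/

import Mathlib

open Finset

/-- Expectation under the uniform distribution on a finite sample space. -/
noncomputable def Ex {α : Type*} (Ω : Finset α) (f : α → ℝ) : ℝ :=
  (∑ ω ∈ Ω, f ω) / (Ω.card : ℝ)

/-- Simple random sampling without replacement: all `n`-element subsets of `Fin N`. -/
def srs (N n : ℕ) : Finset (Finset (Fin N)) :=
  Finset.univ.filter (fun s => s.card = n)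

/-- Sampling indicator: 1 if unit `i` is in the sample. -/
def ind {N : ℕ} (i : Fin N) (s : Finset (Fin N)) : ℝ :=
  if i ∈ s then 1 else 0

lemma srs_eq (N n : ℕ) : srs N n = Finset.powersetCard n (Finset.univ : Finset (Fin N)) := by
  ext ω; simp [srs, Finset.mem_powersetCard]

lemma srs_card (N n : ℕ) : (srs N n).card = N.choose n := by
  rw [srs_eq, Finset.card_powersetCard, Finset.card_univ, Fintype.card_fin]

lemma lemA {α : Type*} [DecidableEq α] (s : Finset α) (Y : α → ℝ) (m : ℕ) (hm : s.card = m)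
    (hm0 : 0 < m) :
    ∑ i ∈ s, ∑ j ∈ s, (Y i - Y j)^2
      = 2 * m * ∑ i ∈ s, (Y i - (∑ j ∈ s, Y j)/(m:ℝ))^2 := by
  have hm' : (m:ℝ) ≠ 0 := Nat.cast_ne_zero.mpr hm0.ne'
  have h1 : ∑ i ∈ s, ∑ j ∈ s, (Y i - Y j)^2
      = m * (∑ i ∈ s, Y i ^ 2) - 2 * (∑ i ∈ s, Y i)^2 + m * (∑ i ∈ s, Y i ^2) := by
    simp only [sub_sq, Finset.sum_add_distrib, Finset.sum_sub_distrib, Finset.sum_const,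
      nsmul_eq_mul, ← Finset.mul_sum, ← Finset.sum_mul, hm]
    ring
  have h2 : ∑ i ∈ s, (Y i - (∑ j ∈ s, Y j)/(m:ℝ))^2
      = (∑ i ∈ s, Y i ^2) - (∑ i ∈ s, Y i)^2 / m := by
    simp only [sub_sq, Finset.sum_add_distrib, Finset.sum_sub_distrib, Finset.sum_const,
      nsmul_eq_mul, ← Finset.sum_mul, hm]
    field_simp
    rw [← Finset.mul_sum]
    ring
  rw [h1, h2]
  field_simp
  ring

lemma hcountB (N n : ℕ) (hn : 2 ≤ n) (i j : Fin N) (hij : i ≠ j) :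
    ((srs N n).filter (fun ω => i ∈ ω ∧ j ∈ ω)).card = (N-2).choose (n-2) := by
  have key : ((srs N n).filter (fun ω => i ∈ ω ∧ j ∈ ω)).card
      = (Finset.powersetCard (n-2) ((Finset.univ.erase i).erase j)).card := by
    apply Finset.card_bij' (fun ω _ => (ω.erase i).erase j)
      (fun t _ => insert i (insert j t))
    · intro ω hω
      simp only [Finset.mem_filter, srs, Finset.mem_univ, true_and] at hω
      obtain ⟨hc, hi, hj⟩ := hω
      rw [Finset.insert_erase (Finset.mem_erase.mpr ⟨Ne.symm hij, hj⟩), Finset.insert_erase hi]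
    · intro t ht
      rw [Finset.mem_powersetCard] at ht
      obtain ⟨hsub, hc⟩ := ht
      have hit : i ∉ t := fun h => by simpa using (hsub h)
      have hjt : j ∉ t := fun h => by simpa [hij.symm] using (hsub h)
      have hiins : i ∉ insert j t := by simp [hij, hit]
      rw [Finset.erase_insert hiins, Finset.erase_insert hjt]
    · intro ω hω
      simp only [Finset.mem_filter, srs, Finset.mem_univ, true_and] at hω
      obtain ⟨hc, hi, hj⟩ := hω
      rw [Finset.mem_powersetCard]
      constructor
      · intro x hx
        simp only [Finset.mem_erase] at hx ⊢
        exact ⟨hx.1, hx.2.1, Finset.mem_univ x⟩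
      · rw [Finset.card_erase_of_mem (Finset.mem_erase.mpr ⟨Ne.symm hij, hj⟩),
          Finset.card_erase_of_mem hi, hc, Nat.sub_sub]
    · intro t ht
      rw [Finset.mem_powersetCard] at ht
      obtain ⟨hsub, hc⟩ := ht
      have hit : i ∉ t := fun h => by simpa using (hsub h)
      have hjt : j ∉ t := fun h => by simpa [hij.symm] using (hsub h)
      have hiins : i ∉ insert j t := by simp [hij, hit]
      simp only [Finset.mem_filter, srs, Finset.mem_univ, true_and]
      refine ⟨?_, Finset.mem_insert_self _ _, Finset.mem_insert_of_mem (Finset.mem_insert_self _ _)⟩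
      rw [Finset.card_insert_of_notMem hiins, Finset.card_insert_of_notMem hjt, hc]
      omega
  rw [key, Finset.card_powersetCard, Finset.card_erase_of_mem (by simp [hij.symm]),
    Finset.card_erase_of_mem (Finset.mem_univ i), Finset.card_univ, Fintype.card_fin, Nat.sub_sub]

lemma lemC (N n : ℕ) : (n+2)*(n+1)*Nat.choose (N+2) (n+2) = (N+2)*(N+1)*Nat.choose N n := by
  have h1 := Nat.add_one_mul_choose_eq (N+1) (n+1)
  have h2 := Nat.add_one_mul_choose_eq N n
  nlinarith [h1, h2]

lemma lemSwap (N n : ℕ) (hn : 2 ≤ n) (Y : Fin N → ℝ) :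
    ∑ ω ∈ srs N n, ∑ i ∈ ω, ∑ j ∈ ω, (Y i - Y j)^2
      = ((N-2).choose (n-2) : ℝ) * ∑ i : Fin N, ∑ j : Fin N, (Y i - Y j)^2 := by
  have step1 : ∀ ω : Finset (Fin N), ∑ i ∈ ω, ∑ j ∈ ω, (Y i - Y j)^2
      = ∑ i : Fin N, ∑ j : Fin N, if i ∈ ω ∧ j ∈ ω then (Y i - Y j)^2 else 0 := by
    intro ω
    have inner : ∀ i : Fin N, (∑ j : Fin N, if i ∈ ω ∧ j ∈ ω then (Y i - Y j)^2 else 0)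
        = if i ∈ ω then ∑ j ∈ ω, (Y i - Y j)^2 else 0 := by
      intro i
      by_cases h : i ∈ ω
      · simp only [h, true_and, if_true]
        rw [Finset.sum_ite_mem, Finset.univ_inter]
      · simp [h]
    rw [Finset.sum_congr rfl (fun i _ => inner i), Finset.sum_ite_mem, Finset.univ_inter]
  calc ∑ ω ∈ srs N n, ∑ i ∈ ω, ∑ j ∈ ω, (Y i - Y j)^2
      = ∑ ω ∈ srs N n, ∑ i : Fin N, ∑ j : Fin N,
          if i ∈ ω ∧ j ∈ ω then (Y i - Y j)^2 else 0 :=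
        Finset.sum_congr rfl (fun ω _ => step1 ω)
    _ = ∑ i : Fin N, ∑ j : Fin N, ∑ ω ∈ srs N n,
          if i ∈ ω ∧ j ∈ ω then (Y i - Y j)^2 else 0 := by
        rw [Finset.sum_comm]
        exact Finset.sum_congr rfl (fun i _ => Finset.sum_comm)
    _ = ∑ i : Fin N, ∑ j : Fin N,
          (((srs N n).filter (fun ω => i ∈ ω ∧ j ∈ ω)).card : ℝ) * (Y i - Y j)^2 := by
        refine Finset.sum_congr rfl fun i _ => Finset.sum_congr rfl fun j _ => ?_
        rw [← Finset.sum_filter, Finset.sum_const, nsmul_eq_mul]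
    _ = ∑ i : Fin N, ∑ j : Fin N, ((N-2).choose (n-2) : ℝ) * (Y i - Y j)^2 := by
        refine Finset.sum_congr rfl fun i _ => Finset.sum_congr rfl fun j _ => ?_
        by_cases h : i = j
        · subst h; simp
        · rw [hcountB N n hn i j h]
    _ = ((N-2).choose (n-2) : ℝ) * ∑ i : Fin N, ∑ j : Fin N, (Y i - Y j)^2 := by
        rw [Finset.mul_sum]
        exact Finset.sum_congr rfl fun i _ => (Finset.mul_sum _ _ _).symm

/-- the sample variance is unbiased for the population
variance under SRSWOR. -/
theorem sample_variance_unbiased (N n : ℕ) (hN : 2 ≤ N) (hn : 2 ≤ n)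
    (hnN : n ≤ N) (Y : Fin N → ℝ) (Ybar Ssq : ℝ)
    (hYbar : Ybar = (∑ i, Y i) / (N : ℝ))
    (hSsq : Ssq = (∑ i, (Y i - Ybar) ^ 2) / ((N : ℝ) - 1)) :
    Ex (srs N n)
      (fun ω => (∑ i ∈ ω, (Y i - (∑ j ∈ ω, Y j) / (n : ℝ)) ^ 2) / ((n : ℝ) - 1))
      = Ssq := by
  have hn0 : (n:ℝ) ≠ 0 := Nat.cast_ne_zero.mpr (by omega)
  have hn2 : (2:ℝ) ≤ (n:ℝ) := by exact_mod_cast hn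
  have hN2 : (2:ℝ) ≤ (N:ℝ) := by exact_mod_cast hN
  have hn1 : (n:ℝ) - 1 ≠ 0 := by linarith
  have hN1 : (N:ℝ) - 1 ≠ 0 := by linarith
  have hN0 : (N:ℝ) ≠ 0 := by linarith
  have hCho : (0:ℝ) < (N.choose n : ℝ) := by
    exact_mod_cast Nat.choose_pos hnN
  -- key counting identity
  have hkey : (n:ℝ) * ((n:ℝ)-1) * (N.choose n : ℝ)
      = (N:ℝ) * ((N:ℝ)-1) * (((N-2).choose (n-2) : ℕ) : ℝ) := by
    obtain ⟨a, rfl⟩ : ∃ a, n = a + 2 := ⟨n - 2, by omega⟩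
    obtain ⟨b, rfl⟩ : ∃ b, N = b + 2 := ⟨N - 2, by omega⟩
    have h := lemC b a
    simp only [Nat.add_sub_cancel]
    have h' : ((a:ℝ)+2)*((a:ℝ)+1)*(((b + 2).choose (a + 2) : ℕ) : ℝ)
        = ((b:ℝ)+2)*((b:ℝ)+1)*((b.choose a : ℕ):ℝ) := by exact_mod_cast h
    push_cast
    linear_combination h'
  -- per-sample identity
  have h1 : ∀ ω ∈ srs N n,
      (∑ i ∈ ω, (Y i - (∑ j ∈ ω, Y j)/(n:ℝ))^2)/((n:ℝ)-1)
        = (∑ i ∈ ω, ∑ j ∈ ω, (Y i - Y j)^2) / (2*(n:ℝ)*((n:ℝ)-1)) := by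
    intro ω hω
    have hc : ω.card = n := by simpa [srs] using hω
    have h := lemA ω Y n hc (by omega)
    rw [h]
    field_simp
    exact Finset.sum_congr rfl fun x _ => by ring
  have hU := lemA (Finset.univ : Finset (Fin N)) Y N (by simp) (by omega)
  rw [← hYbar] at hU
  simp only [Ex]
  rw [Finset.sum_congr rfl h1, ← Finset.sum_div, lemSwap N n hn Y, hU, srs_card, hSsq]
  set S := ∑ i, (Y i - Ybar)^2 with hS
  field_simp
  linear_combination (-S) * hkey
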